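/- The polynomials P_m^p of the generalized Chacon automorphism are palindromic: for every m ≥ 0 and every j with 0 ≤ j ≤ m(p−2), one has π_m(j) = π_m(m(p−2) − j); equivalently, t^{m(p−2)} · P_m^p(1/t) = P_m^p(t). -/

import Mathlib

open MeasureTheory
open scoped NNReal ENNReal

namespace Chacon

/-- The space of digit sequences with digits in `{0, …, p-1}`. -/
def Gamma (p : ℕ) : Set (ℕ → ℕ) := {x | ∀ i, x i < p}

/-- `Γ*`: sequences with digits `< p` having infinitely many coordinates `≠ p - 1`. -/
def GammaStar (p : ℕ) : Set (ℕ → ℕ) :=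
  {x | (∀ i, x i < p) ∧ {i | x i ≠ p - 1}.Infinite}

/-- The least index `i` with `x i ≠ p - 1`. -/
noncomputable def firstNot (p : ℕ) (x : ℕ → ℕ) : ℕ :=
  sInf {i | x i ≠ p - 1}

/-- `φ(x) = x_i` where `i` is the least index with `x_i ≠ p - 1`. -/
noncomputable def phi (p : ℕ) (x : ℕ → ℕ) : ℕ :=
  x (firstNot p x)

/-- The odometer `S` (addition of `1` with carry): the initial run of digits
`p - 1` is replaced by zeros, and the first digit `≠ p - 1` is increased by one. -/
noncomputable def odo (p : ℕ) (x : ℕ → ℕ) : ℕ → ℕ :=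
  fun i =>
    if i < firstNot p x then 0
    else if i = firstNot p x then x i + 1
    else x i

/-- `φ^(m)(x) = ∑_{j=0}^{m-1} φ(S^j x)`. -/
noncomputable def phiSum (p m : ℕ) (x : ℕ → ℕ) : ℕ :=
  ∑ j ∈ Finset.range m, phi p ((odo p)^[j] x)

/-- The base-`p` digit sequence of a real number `u`. -/
noncomputable def digitsOf (p : ℕ) (u : ℝ) : ℕ → ℕ :=
  fun i => (⌊u * (p : ℝ) ^ (i + 1)⌋).toNat % p

/-- `λ`: the product probability measure on digit sequences under which the
coordinates are i.i.d., uniformly distributed in `{0, …, p-1}`; it is realized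
concretely as the distribution of the base-`p` digit sequence of a uniformly
distributed random point of `[0,1)`. -/
noncomputable def lam (p : ℕ) : Measure (ℕ → ℕ) :=
  Measure.map (digitsOf p) (volume.restrict (Set.Ico (0 : ℝ) 1))

/-- `π_m(j) = λ({x : φ^(m)(x) = j})`. -/
noncomputable def pim (p m j : ℕ) : ℝ≥0∞ :=
  lam p {x | phiSum p m x = j}

/-- `P_m^p(t) = ∑_{j ≥ 0} π_m(j) t^j`, a real polynomial
(the sum is over `0 ≤ j ≤ m (p-2)` since `0 ≤ φ^(m) ≤ m (p-2)` a.s.). -/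
noncomputable def P (p m : ℕ) (t : ℝ) : ℝ :=
  ∑ j ∈ Finset.range (m * (p - 2) + 1), (pim p m j).toReal * t ^ j

/-- The `n`-th triangular number `Δ_n = n (n+1) / 2`. -/
def tri (n : ℕ) : ℕ := n * (n + 1) / 2

/-- The degree `D_m` of `P_m^p`: the largest `j` with `π_m(j) ≠ 0`. -/
noncomputable def D (p m : ℕ) : ℕ := sSup {j | pim p m j ≠ 0}

/-- The lower degree `d_m` of `P_m^p`: the least `j` with `π_m(j) ≠ 0`. -/
noncomputable def d (p m : ℕ) : ℕ := sInf {j | pim p m j ≠ 0}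



section Aux

variable {p : ℕ}

/-- digitwise complement -/
def Cp (p : ℕ) (x : ℕ → ℕ) : ℕ → ℕ := fun i => p - 1 - x i

variable {p : ℕ}

lemma firstNot_eq {x : ℕ → ℕ} {i : ℕ} (h1 : x i ≠ p - 1)
    (h2 : ∀ k < i, x k = p - 1) : firstNot p x = i := by
  have hmem : i ∈ {k | x k ≠ p - 1} := h1
  refine le_antisymm (Nat.sInf_le hmem) ?_
  by_contra h
  push_neg at h
  have := Nat.sInf_mem (⟨i, hmem⟩ : {k | x k ≠ p - 1}.Nonempty)
  exact this (h2 _ h)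

lemma firstNot_spec {x : ℕ → ℕ} (hx : x ∈ GammaStar p) :
    x (firstNot p x) ≠ p - 1 ∧ ∀ k < firstNot p x, x k = p - 1 := by
  have hne : {i | x i ≠ p - 1}.Nonempty := hx.2.nonempty
  refine ⟨Nat.sInf_mem hne, fun k hk => ?_⟩
  by_contra h
  exact absurd (Nat.sInf_le h) (not_le.mpr hk)

lemma phi_le (hp : 2 ≤ p) {x : ℕ → ℕ} (hx : x ∈ GammaStar p) : phi p x ≤ p - 2 := by
  have h1 := (firstNot_spec hx).1
  have h2 := hx.1 (firstNot p x)
  unfold phi; omega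

lemma odo_mem (hp : 2 ≤ p) {x : ℕ → ℕ} (hx : x ∈ GammaStar p) : odo p x ∈ GammaStar p := by
  have hs := firstNot_spec hx
  constructor
  · intro i
    unfold odo
    split_ifs with h1 h2
    · omega
    · have := hx.1 i; subst h2; have := hs.1; omega
    · exact hx.1 i
  · apply Set.Infinite.mono ?_ (hx.2.diff (Set.finite_Iic (firstNot p x)))
    intro i hi
    simp only [Set.mem_diff, Set.mem_setOf_eq, Set.mem_Iic, not_le] at hi
    have : odo p x i = x i := by unfold odo; rw [if_neg, if_neg] <;> omega
    simpa [Set.mem_setOf_eq, this] using hi.1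

lemma odo_iter_mem (hp : 2 ≤ p) {x : ℕ → ℕ} (hx : x ∈ GammaStar p) (n : ℕ) :
    (odo p)^[n] x ∈ GammaStar p := by
  induction n with
  | zero => exact hx
  | succ n ih => rw [Function.iterate_succ']; exact odo_mem hp ih

lemma firstNot_Cp_odo (hp : 2 ≤ p) {x : ℕ → ℕ} (hx : x ∈ GammaStar p) :
    firstNot p (Cp p (odo p x)) = firstNot p x := by
  have hs := firstNot_spec hx
  have hlt := hx.1 (firstNot p x)
  apply firstNot_eq
  · show p - 1 - odo p x (firstNot p x) ≠ p - 1
    unfold odo; rw [if_neg (lt_irrefl _), if_pos rfl]; omega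
  · intro k hk
    show p - 1 - odo p x k = p - 1
    unfold odo; rw [if_pos hk]; omega

lemma phi_Cp_odo (hp : 2 ≤ p) {x : ℕ → ℕ} (hx : x ∈ GammaStar p) :
    phi p (Cp p (odo p x)) = p - 2 - phi p x := by
  have hs := firstNot_spec hx
  have hlt := hx.1 (firstNot p x)
  unfold phi
  rw [firstNot_Cp_odo hp hx]
  show p - 1 - odo p x (firstNot p x) = p - 2 - x (firstNot p x)
  unfold odo; rw [if_neg (lt_irrefl _), if_pos rfl]; omega

lemma odo_Cp_odo (hp : 2 ≤ p) {x : ℕ → ℕ} (hx : x ∈ GammaStar p) :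
    odo p (Cp p (odo p x)) = Cp p x := by
  have hs := firstNot_spec hx
  have hfn := firstNot_Cp_odo hp hx
  funext k
  have hlt := hx.1 (firstNot p x)
  have hltk := hx.1 k
  show (if k < firstNot p (Cp p (odo p x)) then 0
    else if k = firstNot p (Cp p (odo p x)) then Cp p (odo p x) k + 1
    else Cp p (odo p x) k) = p - 1 - x k
  rw [hfn]
  rcases lt_trichotomy k (firstNot p x) with h | h | h
  · rw [if_pos h]
    have := hs.2 k h; omega
  · rw [if_neg (by omega), if_pos h]
    show p - 1 - odo p x k + 1 = p - 1 - x k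
    unfold odo; rw [if_neg (by omega), if_pos h]
    rw [h]; have := hs.1; omega
  · rw [if_neg (by omega), if_neg (by omega)]
    show p - 1 - odo p x k = p - 1 - x k
    unfold odo; rw [if_neg (by omega), if_neg (by omega)]

lemma iter_Cp_iter (hp : 2 ≤ p) {x : ℕ → ℕ} (hx : x ∈ GammaStar p) {m : ℕ} :
    ∀ j ≤ m, (odo p)^[j] (Cp p ((odo p)^[m] x)) = Cp p ((odo p)^[m - j] x) := by
  intro j
  induction j with
  | zero => intro _; simp
  | succ j ih =>
    intro hj
    have hj' : j ≤ m := by omega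
    rw [Function.iterate_succ_apply', ih hj']
    have hsplit : (odo p)^[m - j] x = odo p ((odo p)^[m - (j+1)] x) := by
      rw [show m - j = (m - (j+1)) + 1 by omega, Function.iterate_succ_apply']
    rw [hsplit, odo_Cp_odo hp (odo_iter_mem hp hx _)]

lemma phiSum_le (hp : 2 ≤ p) {x : ℕ → ℕ} (hx : x ∈ GammaStar p) (m : ℕ) :
    phiSum p m x ≤ m * (p - 2) := by
  unfold phiSum
  calc ∑ j ∈ Finset.range m, phi p ((odo p)^[j] x)
      ≤ ∑ _j ∈ Finset.range m, (p - 2) :=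
        Finset.sum_le_sum fun j _ => phi_le hp (odo_iter_mem hp hx j)
    _ = m * (p - 2) := by simp [Finset.sum_const, mul_comm]

lemma phiSum_add (hp : 2 ≤ p) {x : ℕ → ℕ} (hx : x ∈ GammaStar p) (m : ℕ) :
    phiSum p m x + phiSum p m (Cp p ((odo p)^[m] x)) = m * (p - 2) := by
  have key : ∀ j ∈ Finset.range m,
      phi p ((odo p)^[j] (Cp p ((odo p)^[m] x))) = p - 2 - phi p ((odo p)^[m - 1 - j] x) := by
    intro j hj
    rw [Finset.mem_range] at hj
    rw [iter_Cp_iter hp hx j (by omega)]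
    have : (odo p)^[m - j] x = odo p ((odo p)^[m - 1 - j] x) := by
      rw [show m - j = (m - 1 - j) + 1 by omega, Function.iterate_succ_apply']
    rw [this, phi_Cp_odo hp (odo_iter_mem hp hx _)]
  have hrefl : phiSum p m x = ∑ j ∈ Finset.range m, phi p ((odo p)^[m - 1 - j] x) := by
    unfold phiSum
    rw [← Finset.sum_range_reflect]
  unfold phiSum
  rw [Finset.sum_congr rfl key, ← phiSum, hrefl, ← Finset.sum_add_distrib]
  rw [Finset.sum_congr rfl (fun j hj => Nat.add_sub_cancel'
    (phi_le hp (odo_iter_mem hp hx (m - 1 - j))))]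
  simp [Finset.sum_const, mul_comm]

lemma digit_int (hp : 2 ≤ p) {u : ℝ} (hu : 0 ≤ u) (k : ℕ) :
    (digitsOf p u k : ℤ) = ⌊u * (p:ℝ) ^ (k + 1)⌋ % p := by
  have h0 : (0:ℤ) ≤ ⌊u * (p:ℝ) ^ (k + 1)⌋ := by
    apply Int.floor_nonneg.mpr; positivity
  unfold digitsOf
  push_cast [Int.toNat_of_nonneg h0]
  ring_nf

lemma floor_rec (hp : 2 ≤ p) {u : ℝ} (k : ℕ) :
    (p:ℤ) * ⌊u * (p:ℝ) ^ k⌋ ≤ ⌊u * (p:ℝ) ^ (k + 1)⌋ ∧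
      ⌊u * (p:ℝ) ^ (k + 1)⌋ < (p:ℤ) * ⌊u * (p:ℝ) ^ k⌋ + p := by
  have hp0 : (0:ℝ) < (p:ℝ) := by positivity
  constructor
  · apply Int.le_floor.mpr
    push_cast
    calc (p:ℝ) * (⌊u * (p:ℝ)^k⌋ : ℝ) ≤ (p:ℝ) * (u * (p:ℝ)^k) := by
          exact mul_le_mul_of_nonneg_left (Int.floor_le _) (le_of_lt hp0)
      _ = u * (p:ℝ)^(k+1) := by ring
  · apply Int.floor_lt.mpr
    push_cast
    calc u * (p:ℝ)^(k+1) = (p:ℝ) * (u * (p:ℝ)^k) := by ring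
      _ < (p:ℝ) * ((⌊u * (p:ℝ)^k⌋ : ℝ) + 1) := by
          exact mul_lt_mul_of_pos_left (Int.lt_floor_add_one _) hp0
      _ = (p:ℝ) * (⌊u * (p:ℝ)^k⌋ : ℝ) + p := by ring

/-- the digit as an integer difference of consecutive floors -/
lemma digit_eq_sub (hp : 2 ≤ p) {u : ℝ} (hu : 0 ≤ u) (k : ℕ) :
    (digitsOf p u k : ℤ) = ⌊u * (p:ℝ) ^ (k + 1)⌋ - p * ⌊u * (p:ℝ) ^ k⌋ := by
  obtain ⟨h1, h2⟩ := floor_rec (u := u) hp k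
  rw [digit_int hp hu k]
  have hp0 : (0:ℤ) < p := by exact_mod_cast Nat.lt_of_lt_of_le Nat.zero_lt_two hp
  set A := ⌊u * (p:ℝ) ^ (k + 1)⌋
  set B := ⌊u * (p:ℝ) ^ k⌋
  have h1' : (0:ℤ) ≤ A - p * B := by linarith
  have h2' : A - p * B < p := by linarith
  have key : A % (p:ℤ) = (A - (p:ℤ) * B) % (p:ℤ) := by
    conv_lhs => rw [show A = (A - (p:ℤ) * B) + (p:ℤ) * B from by ring]
    exact Int.add_mul_emod_self_left ..
  rw [key]
  exact Int.emod_eq_of_lt h1' h2'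


lemma not_tail_max (hp : 2 ≤ p) {u : ℝ} (hu : u ∈ Set.Ico (0:ℝ) 1) (K : ℕ) :
    ¬ (∀ i, K ≤ i → digitsOf p u i = p - 1) := by
  intro h
  have hu0 : (0:ℝ) ≤ u := hu.1
  have hp1 : (1:ℝ) < p := by exact_mod_cast hp.trans_lt' one_lt_two
  set c : ℤ := ⌊u * (p:ℝ)^K⌋ + 1 with hc
  have hrec : ∀ k : ℕ, ⌊u * (p:ℝ)^(K + k)⌋ = (p:ℤ)^k * c - 1 := by
    intro k
    induction k with
    | zero => simp [hc]
    | succ k ih =>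
      have hd := digit_eq_sub hp hu0 (K + k)
      have hdig : ((digitsOf p u (K + k) : ℕ) : ℤ) = (p:ℤ) - 1 := by
        rw [h (K + k) (Nat.le_add_right _ _)]
        push_cast [Nat.cast_sub (by omega : 1 ≤ p)]
        ring
      have : ⌊u * (p:ℝ)^(K + (k+1))⌋ = (p:ℤ) * ⌊u * (p:ℝ)^(K + k)⌋ + ((p:ℤ) - 1) := by
        rw [show K + (k+1) = (K + k) + 1 from rfl]
        rw [← hdig]; omega
      rw [this, ih]; ring
  have hlt : u * (p:ℝ)^K < (c:ℝ) := by
    push_cast [hc]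
    exact Int.lt_floor_add_one _
  have hpos : (0:ℝ) < (c:ℝ) - u * (p:ℝ)^K := by linarith
  obtain ⟨k, hk⟩ := pow_unbounded_of_one_lt (((c:ℝ) - u * (p:ℝ)^K)⁻¹) hp1
  have hfl : ((p:ℝ)^k * (c:ℝ) - 1 : ℝ) ≤ u * (p:ℝ)^(K + k) := by
    have := Int.floor_le (u * (p:ℝ)^(K + k))
    rw [hrec k] at this
    push_cast at this
    linarith
  have hsplit : u * (p:ℝ)^(K + k) = (u * (p:ℝ)^K) * (p:ℝ)^k := by
    rw [pow_add]; ring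
  have h1 : ((c:ℝ) - u * (p:ℝ)^K) * (p:ℝ)^k ≤ 1 := by
    rw [sub_mul]; rw [hsplit] at hfl; linarith
  have h2 : (1:ℝ) < ((c:ℝ) - u * (p:ℝ)^K) * (p:ℝ)^k := by
    calc (1:ℝ) = ((c:ℝ) - u * (p:ℝ)^K) * ((c:ℝ) - u * (p:ℝ)^K)⁻¹ := by
          rw [mul_inv_cancel₀ (ne_of_gt hpos)]
      _ < ((c:ℝ) - u * (p:ℝ)^K) * (p:ℝ)^k := by
          exact mul_lt_mul_of_pos_left hk hpos
  linarith

lemma digitsOf_mem (hp : 2 ≤ p) {u : ℝ} (hu : u ∈ Set.Ico (0:ℝ) 1) :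
    digitsOf p u ∈ GammaStar p := by
  constructor
  · intro i; exact Nat.mod_lt _ (by omega)
  · by_contra hfin
    rw [Set.not_infinite] at hfin
    obtain ⟨K, hK⟩ := hfin.bddAbove
    refine not_tail_max hp hu (K + 1) fun i hi => ?_
    by_contra hne
    exact absurd (hK hne) (by omega)

lemma emod_pow_sub_one (hp : 2 ≤ p) (k : ℕ) : ((p:ℤ)^(k+1) - 1) % p = (p:ℤ) - 1 := by
  have h : (p:ℤ)^(k+1) - 1 = ((p:ℤ) - 1) + (p:ℤ) * ((p:ℤ)^k - 1) := by ring
  rw [h, Int.add_mul_emod_self_left]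
  exact Int.emod_eq_of_lt (by omega) (by omega)

lemma floor_of_prefix (hp : 2 ≤ p) {u : ℝ} (hu : u ∈ Set.Ico (0:ℝ) 1) {i : ℕ}
    (h : ∀ k < i, digitsOf p u k = p - 1) :
    ∀ k ≤ i, ⌊u * (p:ℝ)^k⌋ = (p:ℤ)^k - 1 := by
  intro k hk
  induction k with
  | zero =>
    simp only [pow_zero, mul_one]
    rw [Int.floor_eq_zero_iff.mpr hu]
    norm_num
  | succ k ih =>
    have hd := digit_eq_sub hp hu.1 k
    have hdig : ((digitsOf p u k : ℕ) : ℤ) = (p:ℤ) - 1 := by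
      rw [h k (by omega)]; push_cast [Nat.cast_sub (by omega : 1 ≤ p)]; ring
    have hik := ih (by omega)
    have heq : ⌊u * (p:ℝ)^(k+1)⌋ = (p:ℤ) * ⌊u * (p:ℝ)^k⌋ + ((p:ℤ) - 1) := by
      rw [← hdig]; omega
    rw [heq, hik]; ring

lemma mem_interval_of_firstNot (hp : 2 ≤ p) {u : ℝ} (hu : u ∈ Set.Ico (0:ℝ) 1) :
    u ∈ Set.Ico (1 - 1/(p:ℝ)^(firstNot p (digitsOf p u)))
      (1 - 1/(p:ℝ)^(firstNot p (digitsOf p u) + 1)) := by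
  set i := firstNot p (digitsOf p u) with hi
  have hmem := digitsOf_mem hp hu
  have hspec := firstNot_spec hmem
  have hpi : (0:ℝ) < (p:ℝ)^i := by positivity
  have hpi1 : (0:ℝ) < (p:ℝ)^(i+1) := by positivity
  have hBf : ⌊u * (p:ℝ)^i⌋ = (p:ℤ)^i - 1 := floor_of_prefix hp hu hspec.2 i le_rfl
  constructor
  · have h1 : ((p:ℝ)^i - 1 : ℝ) ≤ u * (p:ℝ)^i := by
      have := Int.floor_le (u * (p:ℝ)^i); rw [hBf] at this; push_cast at this; linarith
    rw [sub_le_comm, le_div_iff₀ hpi, sub_mul, one_mul]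
    linarith
  · have hdigit : digitsOf p u i ≤ p - 2 := by
      show digitsOf p u (firstNot p (digitsOf p u)) ≤ p - 2
      have h1 := hmem.1 (firstNot p (digitsOf p u)); have h2 := hspec.1; omega
    have hA : ⌊u * (p:ℝ)^(i+1)⌋ ≤ (p:ℤ)^(i+1) - 2 := by
      have hd := digit_eq_sub hp hu.1 i
      rw [hBf] at hd
      have hle : ((digitsOf p u i : ℕ) : ℤ) ≤ (p:ℤ) - 2 := by
        have h2p : ((p - 2 : ℕ) : ℤ) = (p:ℤ) - 2 := by omega
        calc ((digitsOf p u i : ℕ) : ℤ) ≤ ((p - 2 : ℕ) : ℤ) := by exact_mod_cast hdigit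
          _ = (p:ℤ) - 2 := h2p
      have hps : (p:ℤ)^(i+1) = p * (p:ℤ)^i := by ring
      have : ⌊u * (p:ℝ)^(i+1)⌋ = (p:ℤ) * ((p:ℤ)^i - 1) + (digitsOf p u i : ℤ) := by omega
      rw [this, hps]
      have hp2 : (2:ℤ) ≤ p := by exact_mod_cast hp
      nlinarith
    have h2 : u * (p:ℝ)^(i+1) < (p:ℝ)^(i+1) - 1 := by
      have hlt := Int.lt_floor_add_one (u * (p:ℝ)^(i+1))
      have hcast : ((⌊u * (p:ℝ)^(i+1)⌋ : ℤ) : ℝ) ≤ ((p:ℤ)^(i+1) - 2 : ℤ) := by exact_mod_cast hA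
      push_cast at hcast
      linarith
    rw [lt_sub_comm, div_lt_iff₀ hpi1, sub_mul, one_mul]
    linarith

lemma firstNot_of_mem_interval (hp : 2 ≤ p) {u : ℝ} (hu : u ∈ Set.Ico (0:ℝ) 1) {i : ℕ}
    (h : u ∈ Set.Ico (1 - 1/(p:ℝ)^i) (1 - 1/(p:ℝ)^(i+1))) :
    firstNot p (digitsOf p u) = i := by
  have hp1 : (1:ℝ) < p := by exact_mod_cast hp.trans_lt' one_lt_two
  have hpi : (0:ℝ) < (p:ℝ)^i := by positivity
  have hpi1 : (0:ℝ) < (p:ℝ)^(i+1) := by positivity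
  have hlow : (p:ℝ)^i - 1 ≤ u * (p:ℝ)^i := by
    have h1 := h.1
    rw [sub_le_comm, le_div_iff₀ hpi, sub_mul, one_mul] at h1
    linarith
  -- digits below i are p - 1
  have hpre : ∀ k < i, digitsOf p u k = p - 1 := by
    intro k hk
    have hple : (p:ℝ)^(k+1) ≤ (p:ℝ)^i := pow_le_pow_right₀ (le_of_lt hp1) (by omega)
    have hpk : (0:ℝ) < (p:ℝ)^(k+1) := by positivity
    have hfl : ⌊u * (p:ℝ)^(k+1)⌋ = (p:ℤ)^(k+1) - 1 := by
      rw [Int.floor_eq_iff]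
      constructor
      · push_cast
        -- p^(k+1) - 1 ≤ u * p^(k+1)
        -- from u ≥ 1 - 1/p^i and p^(k+1) ≤ p^i
        have hmul : ((p:ℝ)^i - 1) * ((p:ℝ)^(k+1)/(p:ℝ)^i) ≤ (u * (p:ℝ)^i) * ((p:ℝ)^(k+1)/(p:ℝ)^i) :=
          mul_le_mul_of_nonneg_right hlow (by positivity)
      
        have e1 : (u * (p:ℝ)^i) * ((p:ℝ)^(k+1)/(p:ℝ)^i) = u * (p:ℝ)^(k+1) := by
          field_simp
        have e2 : ((p:ℝ)^i - 1) * ((p:ℝ)^(k+1)/(p:ℝ)^i) = (p:ℝ)^(k+1) - (p:ℝ)^(k+1)/(p:ℝ)^i := by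
          field_simp
        have e3 : (p:ℝ)^(k+1)/(p:ℝ)^i ≤ 1 := by rw [div_le_one hpi]; exact hple
        rw [e1, e2] at hmul
        linarith
      · push_cast
        have : u * (p:ℝ)^(k+1) < 1 * (p:ℝ)^(k+1) := mul_lt_mul_of_pos_right hu.2 hpk
        linarith
    have hd := digit_int hp hu.1 k
    rw [hfl, emod_pow_sub_one hp] at hd
    omega
  have hBf : ⌊u * (p:ℝ)^i⌋ = (p:ℤ)^i - 1 := floor_of_prefix hp hu hpre i le_rfl
  have hup : u * (p:ℝ)^(i+1) < (p:ℝ)^(i+1) - 1 := by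
    have h2 := h.2
    rw [lt_sub_comm, div_lt_iff₀ hpi1, sub_mul, one_mul] at h2
    linarith
  have hA2 : ⌊u * (p:ℝ)^(i+1)⌋ ≤ (p:ℤ)^(i+1) - 2 := by
    have h1 : (⌊u * (p:ℝ)^(i+1)⌋ : ℝ) < ((p:ℤ)^(i+1) - 1 : ℤ) := by
      push_cast
      linarith [Int.floor_le (u * (p:ℝ)^(i+1))]
    have h2 : ⌊u * (p:ℝ)^(i+1)⌋ < (p:ℤ)^(i+1) - 1 := by exact_mod_cast h1
    omega
  have hd := digit_eq_sub hp hu.1 i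
  rw [hBf] at hd
  have hexp : (p:ℤ) * ((p:ℤ)^i - 1) = (p:ℤ)^(i+1) - p := by ring
  rw [hexp] at hd
  have hdigit_le : (digitsOf p u i : ℤ) ≤ (p:ℤ) - 2 := by omega
  apply firstNot_eq
  · intro hcontra
    rw [hcontra] at hdigit_le
    omega
  · exact hpre

/-- the odometer as a map of `[0,1)` -/
noncomputable def sR (p : ℕ) (u : ℝ) : ℝ :=
  u + (1 + p) / (p:ℝ)^(firstNot p (digitsOf p u) + 1) - 1

lemma sR_mem (hp : 2 ≤ p) {u : ℝ} (hu : u ∈ Set.Ico (0:ℝ) 1) :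
    sR p u ∈ Set.Ico ((1:ℝ)/(p:ℝ)^(firstNot p (digitsOf p u) + 1))
      ((1:ℝ)/(p:ℝ)^(firstNot p (digitsOf p u))) := by
  set i := firstNot p (digitsOf p u)
  have hmem := mem_interval_of_firstNot hp hu
  have hp0 : (0:ℝ) < p := by positivity
  have hpi : (0:ℝ) < (p:ℝ)^i := by positivity
  have hpi1 : (0:ℝ) < (p:ℝ)^(i+1) := by positivity
  have key : (1 + (p:ℝ)) / (p:ℝ)^(i+1) = 1/(p:ℝ)^(i+1) + 1/(p:ℝ)^i := by
    field_simp
    ring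
  constructor
  · show (1:ℝ)/(p:ℝ)^(i+1) ≤ u + (1 + p) / (p:ℝ)^(i+1) - 1
    have := hmem.1
    rw [key]
    linarith
  · show u + (1 + p) / (p:ℝ)^(i+1) - 1 < (1:ℝ)/(p:ℝ)^i
    have := hmem.2
    rw [key]
    linarith

lemma sR_mem_Ico01 (hp : 2 ≤ p) {u : ℝ} (hu : u ∈ Set.Ico (0:ℝ) 1) :
    sR p u ∈ Set.Ico (0:ℝ) 1 := by
  have h := sR_mem hp hu
  have hp1 : (1:ℝ) ≤ p := by exact_mod_cast (by omega : 1 ≤ p)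
  have h1 : (0:ℝ) < (1:ℝ)/(p:ℝ)^(firstNot p (digitsOf p u) + 1) := by positivity
  have h2 : (1:ℝ)/(p:ℝ)^(firstNot p (digitsOf p u)) ≤ 1 := by
    rw [div_le_one (by positivity)]
    exact one_le_pow₀ hp1
  exact ⟨le_of_lt (lt_of_lt_of_le h1 h.1), lt_of_lt_of_le h.2 h2⟩

lemma sR_digits (hp : 2 ≤ p) {u : ℝ} (hu : u ∈ Set.Ico (0:ℝ) 1) :
    digitsOf p (sR p u) = odo p (digitsOf p u) := by
  set i := firstNot p (digitsOf p u) with hidef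
  have hmem := sR_mem hp hu
  have hv01 := sR_mem_Ico01 hp hu
  have hgu := digitsOf_mem hp hu
  have hspec := firstNot_spec hgu
  have hp0 : (0:ℝ) < p := by positivity
  have hp1 : (1:ℝ) < p := by exact_mod_cast (by omega : 1 < p)
  funext k
  rcases lt_trichotomy k i with hk | hk | hk
  · -- digit 0
    have hple : (p:ℝ)^(k+1) ≤ (p:ℝ)^i := pow_le_pow_right₀ (le_of_lt hp1) (by omega)
    have hfl : ⌊sR p u * (p:ℝ)^(k+1)⌋ = 0 := by
      rw [Int.floor_eq_zero_iff]
      constructor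
      · exact mul_nonneg hv01.1 (by positivity)
      · have hlt : sR p u < 1/(p:ℝ)^i := hmem.2
        calc sR p u * (p:ℝ)^(k+1) < (1/(p:ℝ)^i) * (p:ℝ)^(k+1) :=
              mul_lt_mul_of_pos_right hlt (by positivity)
          _ ≤ 1 := by
              rw [div_mul_eq_mul_div, mul_comm, ← div_mul_eq_mul_div]
              calc (p:ℝ)^(k+1)/(p:ℝ)^i * 1 ≤ 1 * 1 := by
                    apply mul_le_mul_of_nonneg_right _ zero_le_one
                    rw [div_le_one (by positivity)]
                    exact hple
                _ = 1 := by ring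
    show (⌊sR p u * (p:ℝ)^(k+1)⌋).toNat % p = odo p (digitsOf p u) k
    rw [hfl]
    unfold odo
    rw [if_pos hk]
    simp
  · -- digit x i + 1
    subst hk
    have hN : sR p u * (p:ℝ)^(i+1) = u * (p:ℝ)^(i+1) + ((1 + p - (p:ℤ)^(i+1) : ℤ) : ℝ) := by
      show (u + (1 + p) / (p:ℝ)^(i+1) - 1) * (p:ℝ)^(i+1) = _
      push_cast
      field_simp
      ring
    have hfl : ⌊sR p u * (p:ℝ)^(i+1)⌋ = ⌊u * (p:ℝ)^(i+1)⌋ + (1 + p - (p:ℤ)^(i+1)) := by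
      rw [hN, Int.floor_add_intCast]
    have hd := digit_int hp hv01.1 i
    rw [hfl] at hd
    have hxk := digit_int hp hu.1 i
    set A := ⌊u * (p:ℝ)^(i+1)⌋ with hA
    have hrlt : digitsOf p u i < p - 1 := by
      have hb1 := hgu.1 i
      have hb2 : digitsOf p u i ≠ p - 1 := hspec.1
      omega
    have hlt' : A % p < (p:ℤ) - 1 := by rw [← hxk]; omega
    have hge' : 0 ≤ A % p := Int.emod_nonneg A (by positivity)
    have step1 : (A + (1 + (p:ℤ) - (p:ℤ)^(i+1))) % p = (A + 1) % p := by
      conv_lhs => rw [show A + (1 + (p:ℤ) - (p:ℤ)^(i+1)) =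
        (A + 1) + (p:ℤ) * (1 - (p:ℤ)^i) from by ring]
      exact Int.add_mul_emod_self_left ..
    have step2 : (A + 1) % p = A % p + 1 := by
      conv_lhs => rw [show A + 1 = (A % p + 1) + (p:ℤ) * (A / p) from by
        have := Int.mul_ediv_add_emod A p; linarith]
      rw [Int.add_mul_emod_self_left]
      exact Int.emod_eq_of_lt (by omega) (by omega)
    rw [step1, step2, ← hxk] at hd
    have hodo : odo p (digitsOf p u) i = digitsOf p u i + 1 := by
      unfold odo
      rw [if_neg (lt_irrefl _), if_pos rfl]
    rw [hodo]
    omega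
  · -- digit unchanged
    obtain ⟨e, rfl⟩ : ∃ e, k = i + e + 1 := by
      refine ⟨k - i - 1, by omega⟩
    have hN : sR p u * (p:ℝ)^(i+e+1+1) = u * (p:ℝ)^(i+e+1+1)
        + (((p:ℤ)^(e+1) + (p:ℤ)^(e+2) - (p:ℤ)^(i+e+2) : ℤ) : ℝ) := by
      show (u + (1 + p) / (p:ℝ)^(i+1) - 1) * (p:ℝ)^(i+e+1+1) = _
      push_cast
      field_simp
      ring
    have hfl : ⌊sR p u * (p:ℝ)^(i+e+1+1)⌋ =
        ⌊u * (p:ℝ)^(i+e+1+1)⌋ + ((p:ℤ)^(e+1) + (p:ℤ)^(e+2) - (p:ℤ)^(i+e+2)) := by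
      rw [hN, Int.floor_add_intCast]
    have hd := digit_int hp hv01.1 (i+e+1)
    rw [hfl] at hd
    have hxk := digit_int hp hu.1 (i+e+1)
    set A := ⌊u * (p:ℝ)^(i+e+1+1)⌋ with hA
    have step1 : (A + ((p:ℤ)^(e+1) + (p:ℤ)^(e+2) - (p:ℤ)^(i+e+2))) % p = A % p := by
      conv_lhs => rw [show A + ((p:ℤ)^(e+1) + (p:ℤ)^(e+2) - (p:ℤ)^(i+e+2)) =
        A + (p:ℤ) * ((p:ℤ)^e + (p:ℤ)^(e+1) - (p:ℤ)^(i+e+1)) from by ring]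
      exact Int.add_mul_emod_self_left ..
    rw [step1, ← hxk] at hd
    have hodo : odo p (digitsOf p u) (i+e+1) = digitsOf p u (i+e+1) := by
      unfold odo
      rw [if_neg (by omega), if_neg (by omega)]
    rw [hodo]
    omega

lemma digit_lt' (hp : 2 ≤ p) (u : ℝ) (k : ℕ) : digitsOf p u k < p := Nat.mod_lt _ (by omega)

def NotPadic (p : ℕ) (u : ℝ) : Prop := ∀ (k : ℕ) (n : ℤ), u * (p:ℝ)^k ≠ n

lemma notPadic_pos {u : ℝ} (h : NotPadic p u) (hu : u ∈ Set.Ico (0:ℝ) 1) : 0 < u :=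
  lt_of_le_of_ne hu.1 fun he => h 0 0 (by simp [← he])

lemma compl_mem {u : ℝ} (h : NotPadic p u) (hu : u ∈ Set.Ico (0:ℝ) 1) :
    1 - u ∈ Set.Ico (0:ℝ) 1 :=
  ⟨by linarith [hu.2], by linarith [notPadic_pos h hu]⟩

lemma compl_digit (hp : 2 ≤ p) {u : ℝ} (hu : u ∈ Set.Ico (0:ℝ) 1) (h : NotPadic p u) (k : ℕ) :
    digitsOf p (1 - u) k = p - 1 - digitsOf p u k := by
  have hp0 : (0:ℝ) < p := by positivity
  set x := u * (p:ℝ)^(k+1) with hx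
  have hceil : ⌈x⌉ = ⌊x⌋ + 1 := by
    refine le_antisymm (Int.ceil_le_floor_add_one _) ?_
    rw [Int.add_one_le_iff, Int.lt_ceil]
    exact lt_of_le_of_ne (Int.floor_le _) fun he => h (k+1) ⌊x⌋ he.symm
  have hfl : ⌊(1 - u) * (p:ℝ)^(k+1)⌋ = (p:ℤ)^(k+1) - ⌊x⌋ - 1 := by
    have : (1 - u) * (p:ℝ)^(k+1) = -x + (((p:ℤ)^(k+1) : ℤ) : ℝ) := by push_cast; ring
    rw [this, Int.floor_add_intCast, Int.floor_neg, hceil]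
    ring
  have hd := digit_int hp (compl_mem h hu).1 k
  rw [hfl] at hd
  set A := ⌊x⌋ with hA
  have hmod : ((p:ℤ)^(k+1) - A - 1) % p = (p:ℤ) - 1 - A % p := by
    have hge : 0 ≤ A % p := Int.emod_nonneg A (by positivity)
    have hlt : A % p < (p:ℤ) := Int.emod_lt_of_pos A (by positivity)
    conv_lhs => rw [show (p:ℤ)^(k+1) - A - 1 =
      ((p:ℤ) - 1 - A % p) + (p:ℤ) * ((p:ℤ)^k - 1 - A / p) from by
        have := Int.mul_ediv_add_emod A p; linear_combination this; ]
    rw [Int.add_mul_emod_self_left]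
    exact Int.emod_eq_of_lt (by omega) (by omega)
  rw [hmod, ← digit_int hp hu.1 k] at hd
  have hlt := digit_lt' hp u k
  omega

lemma sR_notPadic (hp : 2 ≤ p) {u : ℝ} (h : NotPadic p u) : NotPadic p (sR p u) := by
  intro k n heq
  set i := firstNot p (digitsOf p u)
  have hp0 : (0:ℝ) < p := by positivity
  have hpi1 : ((p:ℝ)^(i+1)) ≠ 0 := by positivity
  apply h (k + i + 1) (n * (p:ℤ)^(i+1) - (1 + p) * (p:ℤ)^k + (p:ℤ)^(k+i+1))
  have hsR : sR p u = u + (1 + p) / (p:ℝ)^(i+1) - 1 := rfl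
  rw [hsR] at heq
  push_cast
  have expand : u * (p:ℝ)^(k+i+1) =
      ((u + (1 + p) / (p:ℝ)^(i+1) - 1) * (p:ℝ)^k) * (p:ℝ)^(i+1)
        - (1+p) * (p:ℝ)^k + (p:ℝ)^(k+i+1) := by
    field_simp
    ring
  rw [expand, heq]
  try push_cast
  try ring

lemma notPadic_null (hp : 2 ≤ p) : volume {u : ℝ | ¬ NotPadic p u} = 0 := by
  have hsub : {u : ℝ | ¬ NotPadic p u} ⊆ ⋃ (k : ℕ), ⋃ (n : ℤ), {((n:ℝ)/(p:ℝ)^k)} := by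
    intro u hu
    simp only [NotPadic, not_forall, not_not] at hu
    obtain ⟨k, n, hkn⟩ := hu
    have hp0 : ((p:ℝ)^k) ≠ 0 := by positivity
    have : u = (n:ℝ)/(p:ℝ)^k := by field_simp [← hkn]; exact hkn
    simp only [Set.mem_iUnion, Set.mem_singleton_iff]
    exact ⟨k, n, this⟩
  refine measure_mono_null hsub ?_
  have hcnt : (⋃ (k : ℕ), ⋃ (n : ℤ), {((n:ℝ)/(p:ℝ)^k)}).Countable :=
    Set.countable_iUnion fun k => Set.countable_iUnion fun n => Set.countable_singleton _
  exact hcnt.measure_zero _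

/-! ### Measurability -/

lemma measurable_digitsOf : Measurable (digitsOf p) := by
  apply measurable_pi_lambda
  intro i
  exact (measurable_of_countable (fun z : ℤ => z.toNat % p)).comp
    (Int.measurable_floor.comp (measurable_id.mul_const _))

lemma measurable_firstNot : Measurable (firstNot p) := by
  apply measurable_to_countable'
  intro i
  have heq : firstNot p ⁻¹' {i} =
      ({x : ℕ → ℕ | ∀ k < i, x k = p - 1} ∩ {x | x i ≠ p - 1}) ∪
        {x : ℕ → ℕ | i = 0 ∧ ∀ k, x k = p - 1} := by
    ext x
    simp only [Set.mem_preimage, Set.mem_singleton_iff, Set.mem_union, Set.mem_inter_iff,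
      Set.mem_setOf_eq]
    constructor
    · intro h
      by_cases hne : {k | x k ≠ p - 1}.Nonempty
      · left
        have hmem := Nat.sInf_mem hne
        rw [show sInf {k | x k ≠ p - 1} = firstNot p x from rfl, h] at hmem
        refine ⟨fun k hk => ?_, hmem⟩
        by_contra hc
        have := Nat.sInf_le (show k ∈ {k | x k ≠ p - 1} from hc)
        rw [show sInf {k | x k ≠ p - 1} = firstNot p x from rfl, h] at this
        omega
      · right
        rw [Set.not_nonempty_iff_eq_empty] at hne
        have : firstNot p x = 0 := by
          unfold firstNot; rw [hne]; exact Nat.sInf_empty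
        refine ⟨by omega, fun k => ?_⟩
        by_contra hc
        have : k ∈ ({k | x k ≠ p - 1} : Set ℕ) := hc
        rw [hne] at this
        exact this
    · rintro (⟨h1, h2⟩ | ⟨h0, hall⟩)
      · exact firstNot_eq h2 h1
      · have : {k | x k ≠ p - 1} = (∅ : Set ℕ) := by
          ext k; simp [hall k]
        unfold firstNot; rw [this, Nat.sInf_empty, h0]
  rw [heq]
  apply MeasurableSet.union
  · apply MeasurableSet.inter
    · have : {x : ℕ → ℕ | ∀ k < i, x k = p - 1} =
          ⋂ k, ⋂ (_ : k < i), (fun x : ℕ → ℕ => x k) ⁻¹' {p - 1} := by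
        ext x; simp
      rw [this]
      exact MeasurableSet.iInter fun k => MeasurableSet.iInter fun _ =>
        (measurable_pi_apply k) (measurableSet_singleton _)
    · have hrw : {x : ℕ → ℕ | x i ≠ p - 1} = ((fun x : ℕ → ℕ => x i) ⁻¹' {p - 1})ᶜ := rfl
      rw [hrw]
      exact ((measurable_pi_apply i)
        (measurableSet_singleton (p-1) : MeasurableSet ({p-1} : Set ℕ))).compl
  · by_cases h0 : i = 0
    · have : {x : ℕ → ℕ | i = 0 ∧ ∀ k, x k = p - 1} =
          ⋂ k, (fun x : ℕ → ℕ => x k) ⁻¹' {p - 1} := by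
        ext x; simp [h0]
      rw [this]
      exact MeasurableSet.iInter fun k => (measurable_pi_apply k) (measurableSet_singleton _)
    · have : {x : ℕ → ℕ | i = 0 ∧ ∀ k, x k = p - 1} = ∅ := by
        ext x; simp [h0]
      rw [this]; exact MeasurableSet.empty

lemma measurable_phi : Measurable (phi p) := by
  apply measurable_to_countable'
  intro n
  have heq : phi p ⁻¹' {n} =
      ⋃ i, (firstNot p ⁻¹' {i}) ∩ ((fun x : ℕ → ℕ => x i) ⁻¹' {n}) := by
    ext x
    simp only [Set.mem_preimage, Set.mem_singleton_iff, Set.mem_iUnion, Set.mem_inter_iff]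
    constructor
    · intro h; exact ⟨firstNot p x, rfl, h⟩
    · rintro ⟨i, h1, h2⟩; unfold phi; rw [h1]; exact h2
  rw [heq]
  exact MeasurableSet.iUnion fun i =>
    (measurable_firstNot (measurableSet_singleton i)).inter
      ((measurable_pi_apply i) (measurableSet_singleton n))

lemma measurable_odo : Measurable (odo p) := by
  apply measurable_pi_lambda
  intro k
  exact (measurable_of_countable
    (fun q : ℕ × ℕ => if k < q.1 then 0 else if k = q.1 then q.2 + 1 else q.2)).comp
    (measurable_firstNot.prodMk (measurable_pi_apply k))

lemma measurable_phiSum (m : ℕ) : Measurable (phiSum p m) := by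
  unfold phiSum
  apply Finset.measurable_sum
  intro j _
  exact measurable_phi.comp (measurable_odo.iterate j)

lemma measurable_sR : Measurable (sR p) := by
  have h1 : Measurable fun u : ℝ => firstNot p (digitsOf p u) :=
    measurable_firstNot.comp measurable_digitsOf
  have h2 : Measurable fun u : ℝ => (1 + (p:ℝ)) / (p:ℝ)^(firstNot p (digitsOf p u) + 1) :=
    (measurable_of_countable (fun i : ℕ => (1 + (p:ℝ)) / (p:ℝ)^(i+1))).comp h1
  exact (measurable_id.add h2).sub measurable_const

noncomputable def Iiv (p i : ℕ) : Set ℝ := Set.Ico (1 - 1/(p:ℝ)^i) (1 - 1/(p:ℝ)^(i+1))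
noncomputable def Biv (p i : ℕ) : Set ℝ := Set.Ico ((1:ℝ)/(p:ℝ)^(i+1)) ((1:ℝ)/(p:ℝ)^i)
noncomputable def cC (p i : ℕ) : ℝ := (1 + p) / (p:ℝ)^(i+1) - 1

lemma one_div_pow_anti (hp : 2 ≤ p) {i j : ℕ} (hij : i ≤ j) : (1:ℝ)/(p:ℝ)^j ≤ 1/(p:ℝ)^i := by
  have hp1 : (1:ℝ) ≤ (p:ℝ) := by exact_mod_cast (by omega : 1 ≤ p)
  apply one_div_le_one_div_of_le (by positivity)
  exact pow_le_pow_right₀ hp1 hij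

lemma Iiv_subset (hp : 2 ≤ p) (i : ℕ) : Iiv p i ⊆ Set.Ico (0:ℝ) 1 := by
  intro u hu
  have hp1 : (1:ℝ) ≤ (p:ℝ) := by exact_mod_cast (by omega : 1 ≤ p)
  have h1 : (1:ℝ)/(p:ℝ)^i ≤ 1 := by
    rw [div_le_one (by positivity)]; exact one_le_pow₀ hp1
  have h2 : (0:ℝ) < 1/(p:ℝ)^(i+1) := by positivity
  exact ⟨le_trans (by linarith) hu.1, lt_of_lt_of_le hu.2 (by linarith)⟩

lemma iUnion_Iiv (hp : 2 ≤ p) : (⋃ i, Iiv p i) = Set.Ico (0:ℝ) 1 := by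
  apply Set.Subset.antisymm
  · exact Set.iUnion_subset fun i => Iiv_subset hp i
  · intro u hu
    exact Set.mem_iUnion.mpr ⟨firstNot p (digitsOf p u), mem_interval_of_firstNot hp hu⟩

lemma Iiv_disjoint (hp : 2 ≤ p) : Pairwise (Function.onFun Disjoint (Iiv p)) := by
  intro i j hij
  rw [Function.onFun, Set.disjoint_left]
  intro u hui huj
  rcases Nat.lt_or_ge i j with h | h
  · have h1 : u < 1 - 1/(p:ℝ)^(i+1) := hui.2
    have h2 : 1 - 1/(p:ℝ)^j ≤ u := huj.1
    have := one_div_pow_anti hp (show i + 1 ≤ j by omega)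
    linarith
  · have hji : j < i := by omega
    have h1 : u < 1 - 1/(p:ℝ)^(j+1) := huj.2
    have h2 : 1 - 1/(p:ℝ)^i ≤ u := hui.1
    have := one_div_pow_anti hp (show j + 1 ≤ i by omega)
    linarith

lemma Biv_disjoint (hp : 2 ≤ p) : Pairwise (Function.onFun Disjoint (Biv p)) := by
  intro i j hij
  rw [Function.onFun, Set.disjoint_left]
  intro u hui huj
  rcases Nat.lt_or_ge i j with h | h
  · have h1 : (1:ℝ)/(p:ℝ)^(i+1) ≤ u := hui.1
    have h2 : u < 1/(p:ℝ)^j := huj.2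
    have := one_div_pow_anti hp (show i + 1 ≤ j by omega)
    linarith
  · have hji : j < i := by omega
    have h1 : (1:ℝ)/(p:ℝ)^(j+1) ≤ u := huj.1
    have h2 : u < 1/(p:ℝ)^i := hui.2
    have := one_div_pow_anti hp (show j + 1 ≤ i by omega)
    linarith

lemma iUnion_Biv (hp : 2 ≤ p) : (⋃ i, Biv p i) = Set.Ioo (0:ℝ) 1 := by
  have hp1 : (1:ℝ) < (p:ℝ) := by exact_mod_cast (by omega : 1 < p)
  apply Set.Subset.antisymm
  · apply Set.iUnion_subset
    intro i u hu
    have h0 : (0:ℝ) < 1/(p:ℝ)^(i+1) := by positivity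
    have h1 : (1:ℝ)/(p:ℝ)^i ≤ 1 := by
      rw [div_le_one (by positivity)]; exact one_le_pow₀ hp1.le
    exact ⟨lt_of_lt_of_le h0 hu.1, lt_of_lt_of_le hu.2 h1⟩
  · intro u hu
    classical
    have hex : ∃ n : ℕ, (1:ℝ)/(p:ℝ)^n ≤ u := by
      obtain ⟨n, hn⟩ := pow_unbounded_of_one_lt (1/u) hp1
      refine ⟨n, ?_⟩
      rw [div_le_iff₀ (by positivity)]
      rw [div_lt_iff₀ hu.1] at hn
      linarith
    set j := Nat.find hex with hj
    have hjspec : (1:ℝ)/(p:ℝ)^j ≤ u := Nat.find_spec hex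
    have hj0 : j ≠ 0 := by
      intro h0
      rw [h0] at hjspec
      simp at hjspec
      linarith [hu.2]
    obtain ⟨i, hi⟩ : ∃ i, j = i + 1 := ⟨j - 1, by omega⟩
    have hnot : ¬ ((1:ℝ)/(p:ℝ)^i ≤ u) := Nat.find_min hex (by omega)
    push_neg at hnot
    rw [hi] at hjspec
    exact Set.mem_iUnion.mpr ⟨i, hjspec, hnot⟩

lemma sR_eq_on_Iiv (hp : 2 ≤ p) {u : ℝ} {i : ℕ} (hu : u ∈ Iiv p i) :
    sR p u = u + cC p i := by
  have h1 : firstNot p (digitsOf p u) = i := firstNot_of_mem_interval hp (Iiv_subset hp i hu) hu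
  show u + (1 + p) / (p:ℝ)^(firstNot p (digitsOf p u) + 1) - 1 = u + ((1 + p) / (p:ℝ)^(i+1) - 1)
  rw [h1]; ring

lemma preimage_on_Iiv (hp : 2 ≤ p) (A : Set ℝ) (i : ℕ) :
    sR p ⁻¹' A ∩ Iiv p i = (fun u => u + cC p i) ⁻¹' (A ∩ Biv p i) := by
  have hp0 : (0:ℝ) < p := by positivity
  have hpi1 : (0:ℝ) < (p:ℝ)^(i+1) := by positivity
  have hkey : (1 + (p:ℝ)) / (p:ℝ)^(i+1) = 1/(p:ℝ)^(i+1) + 1/(p:ℝ)^i := by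
    field_simp; ring
  ext u
  simp only [Set.mem_inter_iff, Set.mem_preimage]
  constructor
  · rintro ⟨hA, hI⟩
    have he := sR_eq_on_Iiv hp hI
    refine ⟨by rw [← he]; exact hA, ?_⟩
    -- u + cC p i ∈ Biv p i
    have h1 : 1 - 1/(p:ℝ)^i ≤ u := hI.1
    have h2 : u < 1 - 1/(p:ℝ)^(i+1) := hI.2
    constructor
    · show (1:ℝ)/(p:ℝ)^(i+1) ≤ u + ((1 + p) / (p:ℝ)^(i+1) - 1)
      rw [hkey]; linarith
    · show u + ((1 + p) / (p:ℝ)^(i+1) - 1) < 1/(p:ℝ)^i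
      rw [hkey]; linarith
  · rintro ⟨hA, hB⟩
    have h1 : (1:ℝ)/(p:ℝ)^(i+1) ≤ u + ((1 + p) / (p:ℝ)^(i+1) - 1) := hB.1
    have h2 : u + ((1 + p) / (p:ℝ)^(i+1) - 1) < 1/(p:ℝ)^i := hB.2
    rw [hkey] at h1 h2
    have hI : u ∈ Iiv p i := ⟨by linarith, by linarith⟩
    exact ⟨by rw [sR_eq_on_Iiv hp hI]; exact hA, hI⟩

lemma meas_sR_preimage (hp : 2 ≤ p) {A : Set ℝ} (hA : MeasurableSet A) :
    volume (sR p ⁻¹' A ∩ Set.Ico (0:ℝ) 1) = volume (A ∩ Set.Ico (0:ℝ) 1) := by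
  have hIiv_meas : ∀ i, MeasurableSet (Iiv p i) := fun i => measurableSet_Ico
  have hBiv_meas : ∀ i, MeasurableSet (Biv p i) := fun i => measurableSet_Ico
  have h1 : sR p ⁻¹' A ∩ Set.Ico (0:ℝ) 1 = ⋃ i, (sR p ⁻¹' A ∩ Iiv p i) := by
    rw [← iUnion_Iiv hp, Set.inter_iUnion]
  rw [h1, measure_iUnion ?_ ?_]
  · have h2 : ∀ i, volume (sR p ⁻¹' A ∩ Iiv p i) = volume (A ∩ Biv p i) := by
      intro i
      rw [preimage_on_Iiv hp A i]
      exact measure_preimage_add_right volume (cC p i) (A ∩ Biv p i)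
    rw [tsum_congr h2, ← measure_iUnion ?_ ?_]
    · rw [← Set.inter_iUnion, iUnion_Biv hp]
      have hnull : volume ({(0:ℝ)} : Set ℝ) = 0 := measure_singleton 0
      apply le_antisymm
      · exact measure_mono fun u hu => ⟨hu.1, hu.2.1.le, hu.2.2⟩
      · calc volume (A ∩ Set.Ico (0:ℝ) 1)
            ≤ volume (A ∩ Set.Ioo (0:ℝ) 1 ∪ {0}) := by
              apply measure_mono
              rintro u ⟨huA, hu0, hu1⟩
              rcases eq_or_lt_of_le hu0 with h | h
              · right; simp [← h]
              · left; exact ⟨huA, h, hu1⟩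
          _ ≤ volume (A ∩ Set.Ioo (0:ℝ) 1) + volume ({(0:ℝ)} : Set ℝ) := measure_union_le _ _
          _ = volume (A ∩ Set.Ioo (0:ℝ) 1) := by rw [hnull, add_zero]
    · exact fun i j hij => Set.disjoint_left.mpr fun u hu1 hu2 =>
        Set.disjoint_left.mp (Biv_disjoint hp hij) hu1.2 hu2.2
    · exact fun i => hA.inter (hBiv_meas i)
  · exact fun i j hij => Set.disjoint_left.mpr fun u hu1 hu2 =>
      Set.disjoint_left.mp (Iiv_disjoint hp hij) hu1.2 hu2.2
  · exact fun i => (measurable_sR hA).inter (hIiv_meas i)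

lemma meas_compl_preimage {A : Set ℝ} (hA : MeasurableSet A) :
    volume ((fun u : ℝ => 1 - u) ⁻¹' A ∩ Set.Ico (0:ℝ) 1) = volume (A ∩ Set.Ico (0:ℝ) 1) := by
  have hkey : ∀ B : Set ℝ, volume ((fun u : ℝ => 1 - u) ⁻¹' B) = volume B := by
    intro B
    have h : (fun u : ℝ => 1 - u) ⁻¹' B = (fun u : ℝ => -u) ⁻¹' ((fun u : ℝ => u + 1) ⁻¹' B) := by
      ext u; simp [sub_eq_neg_add, add_comm]
    rw [h]
    rw [show ((fun u : ℝ => -u) ⁻¹' ((fun u : ℝ => u + 1) ⁻¹' B)) =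
      -((fun u : ℝ => u + 1) ⁻¹' B) from rfl]
    rw [Measure.measure_neg, measure_preimage_add_right]
  have h2 : (fun u : ℝ => 1 - u) ⁻¹' A ∩ Set.Ico (0:ℝ) 1 =
      (fun u : ℝ => 1 - u) ⁻¹' (A ∩ Set.Ioc (0:ℝ) 1) := by
    ext u
    simp only [Set.mem_inter_iff, Set.mem_preimage, Set.mem_Ico, Set.mem_Ioc]
    constructor
    · rintro ⟨hA', h0, h1⟩; exact ⟨hA', by linarith, by linarith⟩
    · rintro ⟨hA', h0, h1⟩; exact ⟨hA', by linarith, by linarith⟩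
  rw [h2, hkey]
  -- volume (A ∩ Ioc 0 1) = volume (A ∩ Ico 0 1)
  have hnull0 : volume ({(0:ℝ)} : Set ℝ) = 0 := measure_singleton 0
  have hnull1 : volume ({(1:ℝ)} : Set ℝ) = 0 := measure_singleton 1
  apply le_antisymm
  · calc volume (A ∩ Set.Ioc (0:ℝ) 1)
        ≤ volume (A ∩ Set.Ico (0:ℝ) 1 ∪ {1}) := by
          apply measure_mono
          rintro u ⟨huA, hu0, hu1⟩
          rcases eq_or_lt_of_le hu1 with h | h
          · right; simp [h]
          · left; exact ⟨huA, hu0.le, h⟩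
      _ ≤ _ + volume ({(1:ℝ)} : Set ℝ) := measure_union_le _ _
      _ = volume (A ∩ Set.Ico (0:ℝ) 1) := by rw [hnull1, add_zero]
  · calc volume (A ∩ Set.Ico (0:ℝ) 1)
        ≤ volume (A ∩ Set.Ioc (0:ℝ) 1 ∪ {0}) := by
          apply measure_mono
          rintro u ⟨huA, hu0, hu1⟩
          rcases eq_or_lt_of_le hu0 with h | h
          · right; simp [← h]
          · left; exact ⟨huA, h, hu1.le⟩
      _ ≤ _ + volume ({(0:ℝ)} : Set ℝ) := measure_union_le _ _
      _ = volume (A ∩ Set.Ioc (0:ℝ) 1) := by rw [hnull0, add_zero]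



/-! ### Glue: iteration, conjugation, and the measure identity -/

lemma sR_iter (hp : 2 ≤ p) {u : ℝ} (hu : u ∈ Set.Ico (0:ℝ) 1) (m : ℕ) :
    (sR p)^[m] u ∈ Set.Ico (0:ℝ) 1 ∧
      digitsOf p ((sR p)^[m] u) = (odo p)^[m] (digitsOf p u) := by
  induction m with
  | zero => simpa using hu
  | succ m ih =>
    rw [Function.iterate_succ_apply', Function.iterate_succ_apply']
    exact ⟨sR_mem_Ico01 hp ih.1, by rw [sR_digits hp ih.1, ih.2]⟩

lemma sR_iter_notPadic (hp : 2 ≤ p) {u : ℝ} (h : NotPadic p u) (m : ℕ) :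
    NotPadic p ((sR p)^[m] u) := by
  induction m with
  | zero => simpa using h
  | succ m ih => rw [Function.iterate_succ_apply']; exact sR_notPadic hp ih

lemma compl_digits_eq_Cp (hp : 2 ≤ p) {v : ℝ} (hv : v ∈ Set.Ico (0:ℝ) 1)
    (h : NotPadic p v) : digitsOf p (1 - v) = Cp p (digitsOf p v) := by
  funext k
  exact compl_digit hp hv h k

/-- the composite map realizing `x ↦ C (S^m x)` on `[0,1)` -/
noncomputable def rR (p m : ℕ) (u : ℝ) : ℝ := 1 - (sR p)^[m] u

lemma rR_digits (hp : 2 ≤ p) {u : ℝ} (hu : u ∈ Set.Ico (0:ℝ) 1) (hnp : NotPadic p u)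
    (m : ℕ) : digitsOf p (rR p m u) = Cp p ((odo p)^[m] (digitsOf p u)) := by
  obtain ⟨hv, hd⟩ := sR_iter hp hu m
  have hnp' := sR_iter_notPadic hp hnp m
  unfold rR
  rw [compl_digits_eq_Cp hp hv hnp', hd]

lemma measurable_K (m j : ℕ) : MeasurableSet {u : ℝ | phiSum p m (digitsOf p u) = j} := by
  have : {u : ℝ | phiSum p m (digitsOf p u) = j} =
      (fun u => phiSum p m (digitsOf p u)) ⁻¹' {j} := rfl
  rw [this]
  exact ((measurable_phiSum m).comp measurable_digitsOf) (measurableSet_singleton j)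

lemma pim_eq_volume (hp : 2 ≤ p) (m j : ℕ) :
    pim p m j = volume ({u : ℝ | phiSum p m (digitsOf p u) = j} ∩ Set.Ico (0:ℝ) 1) := by
  unfold pim lam
  have hms : MeasurableSet {x : ℕ → ℕ | phiSum p m x = j} :=
    (measurable_phiSum m) (measurableSet_singleton j)
  rw [Measure.map_apply measurable_digitsOf hms,
    Measure.restrict_apply (measurable_digitsOf hms)]
  rfl

lemma meas_sR_iter_preimage (hp : 2 ≤ p) {A : Set ℝ} (hA : MeasurableSet A) (m : ℕ) :
    volume ((sR p)^[m] ⁻¹' A ∩ Set.Ico (0:ℝ) 1) = volume (A ∩ Set.Ico (0:ℝ) 1) := by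
  induction m with
  | zero => simp
  | succ m ih =>
    have h1 : (sR p)^[m+1] ⁻¹' A = sR p ⁻¹' ((sR p)^[m] ⁻¹' A) := by
      ext u
      simp [Function.iterate_succ_apply]
    rw [h1, meas_sR_preimage hp ((measurable_sR.iterate m) hA), ih]

lemma measure_eq_of_eq_off_null {X Y N : Set ℝ} (hN : volume N = 0) (h : X \ N = Y \ N) :
    volume X = volume Y := by
  rw [← measure_diff_null hN, h, measure_diff_null hN]

lemma pim_symm (hp : 3 ≤ p) (m j : ℕ) (hj : j ≤ m * (p - 2)) :
    pim p m j = pim p m (m * (p - 2) - j) := by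
  have hp2 : 2 ≤ p := by omega
  set M := m * (p - 2) with hM
  set K1 : Set ℝ := {u : ℝ | phiSum p m (digitsOf p u) = j} with hK1
  set K2 : Set ℝ := {u : ℝ | phiSum p m (digitsOf p u) = M - j} with hK2
  have hsetid : (K1 ∩ Set.Ico (0:ℝ) 1) \ {u : ℝ | ¬ NotPadic p u}
      = (rR p m ⁻¹' K2 ∩ Set.Ico (0:ℝ) 1) \ {u : ℝ | ¬ NotPadic p u} := by
    ext u
    simp only [Set.mem_diff, Set.mem_inter_iff, Set.mem_setOf_eq, Set.mem_preimage, not_not]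
    constructor
    · rintro ⟨⟨h1, h2⟩, h3⟩
      refine ⟨⟨?_, h2⟩, h3⟩
      show phiSum p m (digitsOf p (rR p m u)) = M - j
      rw [rR_digits hp2 h2 h3 m]
      have hx := digitsOf_mem hp2 h2
      have hadd := phiSum_add hp2 hx m
      have h1' : phiSum p m (digitsOf p u) = j := h1
      have hMeq : M = m * (p - 2) := hM
      omega
    · rintro ⟨⟨h1, h2⟩, h3⟩
      refine ⟨⟨?_, h2⟩, h3⟩
      have h1' : phiSum p m (digitsOf p (rR p m u)) = M - j := h1
      rw [rR_digits hp2 h2 h3 m] at h1'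
      have hx := digitsOf_mem hp2 h2
      have hadd := phiSum_add hp2 hx m
      have hle := phiSum_le hp2 hx m
      have hMeq : M = m * (p - 2) := hM
      show phiSum p m (digitsOf p u) = j
      omega
  have hK2meas : MeasurableSet K2 := measurable_K m (M - j)
  calc pim p m j = volume (K1 ∩ Set.Ico (0:ℝ) 1) := pim_eq_volume hp2 m j
    _ = volume (rR p m ⁻¹' K2 ∩ Set.Ico (0:ℝ) 1) :=
        measure_eq_of_eq_off_null (notPadic_null hp2) hsetid
    _ = volume ((sR p)^[m] ⁻¹' ((fun v : ℝ => 1 - v) ⁻¹' K2) ∩ Set.Ico (0:ℝ) 1) := rfl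
    _ = volume ((fun v : ℝ => 1 - v) ⁻¹' K2 ∩ Set.Ico (0:ℝ) 1) :=
        meas_sR_iter_preimage hp2 ((measurable_const.sub measurable_id) hK2meas) m
    _ = volume (K2 ∩ Set.Ico (0:ℝ) 1) := meas_compl_preimage hK2meas
    _ = pim p m (M - j) := (pim_eq_volume hp2 m (M - j)).symm


end Aux

/-- the polynomials `P_m^p` are palindromic: `π_m(j) = π_m(m(p-2) - j)`
for all `0 ≤ j ≤ m(p-2)`; equivalently `t^{m(p-2)} P_m^p(1/t) = P_m^p(t)`. -/
theorem statement_4 (p : ℕ) (hp : 3 ≤ p) :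
    (∀ m j : ℕ, j ≤ m * (p - 2) → pim p m j = pim p m (m * (p - 2) - j)) ∧
    (∀ m : ℕ, ∀ t : ℝ, t ≠ 0 → t ^ (m * (p - 2)) * P p m t⁻¹ = P p m t) := by
  have hsym : ∀ m j : ℕ, j ≤ m * (p - 2) → pim p m j = pim p m (m * (p - 2) - j) :=
    fun m j hj => pim_symm hp m j hj
  refine ⟨hsym, fun m t ht => ?_⟩
  set M := m * (p - 2) with hM
  unfold P
  rw [Finset.mul_sum]
  have hterm : ∀ j ∈ Finset.range (M + 1),
      t ^ M * ((pim p m j).toReal * t⁻¹ ^ j) = (pim p m (M - j)).toReal * t ^ (M - j) := by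
    intro j hj
    rw [Finset.mem_range] at hj
    have hjM : j ≤ M := by omega
    rw [← hsym m j hjM]
    have hpow : t ^ M * t⁻¹ ^ j = t ^ (M - j) := by
      have h1 : t ^ M = t ^ (M - j) * t ^ j := by
        rw [← pow_add]
        congr 1
        omega
      rw [h1, mul_assoc, ← mul_pow, mul_inv_cancel₀ ht, one_pow, mul_one]
    calc t ^ M * ((pim p m j).toReal * t⁻¹ ^ j)
        = (pim p m j).toReal * (t ^ M * t⁻¹ ^ j) := by ring
      _ = (pim p m j).toReal * t ^ (M - j) := by rw [hpow]
  rw [Finset.sum_congr rfl hterm]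
  have := Finset.sum_range_reflect (fun j => (pim p m j).toReal * t ^ j) (M + 1)
  simpa using this

end Chacon
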